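/- Let L, c, f_co > 0 and θ ∈ (0, π/2), define F̂(f) = f^{-2}·(L − (L³π²f²/(6c²))·(1 − f_co²/(2f²) − cos θ)²) for f > 0, and set f₁⁽²⁾ = √5·f_co² / √(36c²/(L²π²) + 6(1 − cos θ)·f_co²). Then the second derivative of F̂ is strictly negative on (0, f₁⁽²⁾) and strictly positive on (f₁⁽²⁾, ∞). -/

import Mathlib

open Real

/-- The normalized signal-strength function
`F̂(f) = f⁻²·(L − (L³π²f²/(6c²))·(1 − f_co²/(2f²) − cos θ)²)`. -/
noncomputable def Fhat (L c f_co θ : ℝ) (f : ℝ) : ℝ :=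
  (L - (L ^ 3 * π ^ 2 * f ^ 2 / (6 * c ^ 2)) *
      (1 - f_co ^ 2 / (2 * f ^ 2) - Real.cos θ) ^ 2) / f ^ 2

/-- The inflection point `f₁⁽²⁾ = √5·f_co² / √(36c²/(L²π²) + 6(1 − cos θ)·f_co²)`. -/
noncomputable def fTwo (L c f_co θ : ℝ) : ℝ :=
  Real.sqrt 5 * f_co ^ 2 /
    Real.sqrt (36 * c ^ 2 / (L ^ 2 * π ^ 2) + 6 * (1 - Real.cos θ) * f_co ^ 2)

/-- the second derivative of `F̂` is strictly negative on `(0, f₁⁽²⁾)` and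
strictly positive on `(f₁⁽²⁾, ∞)`. -/
theorem second_deriv_Fhat_sign (L c f_co θ : ℝ) (hL : 0 < L) (hc : 0 < c)
    (hfco : 0 < f_co) (hθ : θ ∈ Set.Ioo 0 (π / 2)) :
    (∀ f ∈ Set.Ioo 0 (fTwo L c f_co θ), deriv (deriv (Fhat L c f_co θ)) f < 0) ∧
      (∀ f ∈ Set.Ioi (fTwo L c f_co θ), 0 < deriv (deriv (Fhat L c f_co θ)) f) := by
  obtain ⟨hθ0, hθ1⟩ := hθ
  have hπ := Real.pi_pos
  have hk : Real.cos θ < 1 := by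
    calc Real.cos θ < Real.cos 0 :=
          Real.cos_lt_cos_of_nonneg_of_le_pi le_rfl (by linarith) hθ0
      _ = 1 := Real.cos_zero
  set A := L ^ 3 * π ^ 2 / (6 * c ^ 2) with hA_def
  have hApos : 0 < A := by positivity
  set a := L + A * (1 - Real.cos θ) * f_co ^ 2 with ha_def
  set b := A * f_co ^ 4 / 4 with hb_def
  have ha : 0 < a := by nlinarith [sq_nonneg f_co, mul_pos hApos (mul_pos (by linarith : (0:ℝ) < 1 - Real.cos θ) (pow_pos hfco 2))]
  have hb : 0 < b := by positivity
  set D := 36 * c ^ 2 / (L ^ 2 * π ^ 2) + 6 * (1 - Real.cos θ) * f_co ^ 2 with hD_def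
  have hDpos : 0 < D := by
    rw [hD_def]
    have h1 : (0:ℝ) < 36 * c ^ 2 / (L ^ 2 * π ^ 2) := by positivity
    have h2 : (0:ℝ) ≤ 6 * (1 - Real.cos θ) * f_co ^ 2 :=
      mul_nonneg (by linarith) (sq_nonneg f_co)
    linarith
  set f₂ := fTwo L c f_co θ with hf2_def
  have hf2pos : 0 < f₂ := by
    rw [hf2_def, fTwo]
    exact div_pos (mul_pos (Real.sqrt_pos.mpr (by norm_num)) (pow_pos hfco 2))
      (Real.sqrt_pos.mpr hDpos)
  have hf2sq : f₂ ^ 2 = 5 * f_co ^ 4 / D := by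
    rw [hf2_def, fTwo, div_pow, mul_pow, sq_sqrt (by norm_num : (0:ℝ) ≤ 5),
      sq_sqrt (hD_def ▸ hDpos.le), ← hD_def]
    ring
  have key0 : 3 * a * f_co ^ 4 = 2 * b * D := by
    rw [ha_def, hb_def, hA_def, hD_def]
    field_simp
    ring
  have key : 6 * a * f₂ ^ 2 = 20 * b := by
    have hDne : D ≠ 0 := hDpos.ne'
    rw [hf2sq]
    field_simp
    linear_combination 10 * key0
  set cst := -(A * (1 - Real.cos θ) ^ 2) with hcst_def
  set G : ℝ → ℝ := fun x => a * x ^ (-2:ℤ) - b * x ^ (-4:ℤ) + cst with hG_def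
  set H : ℝ → ℝ := fun x => -2 * a * x ^ (-3:ℤ) + 4 * b * x ^ (-5:ℤ) with hH_def
  have hFG : ∀ x : ℝ, x ≠ 0 → Fhat L c f_co θ x = G x := by
    intro x hx
    have e2 : x ^ (-2:ℤ) = (x ^ 2)⁻¹ := by simp [zpow_neg]
    have e4 : x ^ (-4:ℤ) = (x ^ 4)⁻¹ := by simp [zpow_neg]
    rw [Fhat, hG_def]
    simp only [e2, e4, ha_def, hb_def, hcst_def, hA_def]
    field_simp
    ring
  have hGderiv : ∀ x : ℝ, x ≠ 0 → HasDerivAt G (H x) x := by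
    intro x hx
    have h2 := ((hasDerivAt_zpow (-2) x (Or.inl hx)).const_mul a).sub
      ((hasDerivAt_zpow (-4) x (Or.inl hx)).const_mul b)
    have h3 := h2.add_const cst
    convert h3 using 1
    · rfl
    rotate_left
    · rfl
    rw [hH_def]
    push_cast
    norm_num
    ring
    rfl
  have hHderiv : ∀ x : ℝ, x ≠ 0 →
      HasDerivAt H (6 * a * x ^ (-4:ℤ) - 20 * b * x ^ (-6:ℤ)) x := by
    intro x hx
    have h2 := ((hasDerivAt_zpow (-3) x (Or.inl hx)).const_mul (-2 * a)).add
      ((hasDerivAt_zpow (-5) x (Or.inl hx)).const_mul (4 * b))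
    convert h2 using 1
    · rfl
    rotate_left
    · rfl
    push_cast
    norm_num
    ring
    rfl
  have hderiv1 : ∀ x : ℝ, x ≠ 0 → deriv (Fhat L c f_co θ) x = H x := by
    intro x hx
    have hev : Fhat L c f_co θ =ᶠ[nhds x] G := by
      filter_upwards [eventually_ne_nhds hx] with y hy using hFG y hy
    rw [hev.deriv_eq, (hGderiv x hx).deriv]
  have hderiv2 : ∀ x : ℝ, x ≠ 0 →
      deriv (deriv (Fhat L c f_co θ)) x = 6 * a * x ^ (-4:ℤ) - 20 * b * x ^ (-6:ℤ) := by
    intro x hx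
    have hev : deriv (Fhat L c f_co θ) =ᶠ[nhds x] H := by
      filter_upwards [eventually_ne_nhds hx] with y hy using hderiv1 y hy
    rw [hev.deriv_eq, (hHderiv x hx).deriv]
  have hsign : ∀ x : ℝ, 0 < x →
      deriv (deriv (Fhat L c f_co θ)) x = x ^ (-6:ℤ) * (6 * a * (x ^ 2 - f₂ ^ 2)) := by
    intro x hx
    rw [hderiv2 x hx.ne']
    have hx6 : x ^ (-6:ℤ) * x ^ 2 = x ^ (-4:ℤ) := by
      rw [← zpow_natCast x 2, ← zpow_add₀ hx.ne']
      norm_num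
    linear_combination (-(6 * a)) * hx6 + x ^ (-6:ℤ) * key
  constructor
  · rintro f ⟨hf0, hff2⟩
    rw [hsign f hf0]
    have h1 : (0:ℝ) < f ^ (-6:ℤ) := zpow_pos hf0 _
    have h2 : f ^ 2 < f₂ ^ 2 := pow_lt_pow_left₀ hff2 hf0.le (by norm_num)
    exact mul_neg_of_pos_of_neg h1
      (mul_neg_of_pos_of_neg (by linarith) (by linarith))
  · intro f hf
    have hf' : f₂ < f := hf
    have hf0 : 0 < f := lt_trans hf2pos hf'
    rw [hsign f hf0]
    have h1 : (0:ℝ) < f ^ (-6:ℤ) := zpow_pos hf0 _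
    have h2 : f₂ ^ 2 < f ^ 2 := pow_lt_pow_left₀ hf' hf2pos.le (by norm_num)
    exact mul_pos h1 (mul_pos (by linarith) (by linarith))
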